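/- Let γ ∈ (1/2, 1). Define h : [0,1] → ℝ on binary expansions by: for λ = Σ_{i∈T} 2^{−i} with T ⊆ ℕ, set h(λ) = inf over valid expansions T of Σ_{i∈T} γ^{i−1}. Then for every x in [0,1], limsup_{δ→0} |h(x+δ) − h(x)|/|δ| = +∞; in particular h is nowhere differentiable on [0,1]. -/

import Mathlib

open Set

/-- `λ(T) = Σ_{i ∈ T} 2^{-i}`, where `T ⊆ ℕ` encodes a set of positive integers
via the shift `i ↦ i + 1`. -/
noncomputable def lamOf (T : Set ℕ) : ℝ :=
  ∑' i : ℕ, T.indicator (fun i => (2 : ℝ)⁻¹ ^ (i + 1)) i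

/-- `h(λ)` is the infimum of `Σ_{i ∈ T} γ^{i-1}` over valid binary expansions `T` of `λ`. -/
noncomputable def hFun (γ : ℝ) (x : ℝ) : ℝ :=
  sInf {s : ℝ | ∃ T : Set ℕ, lamOf T = x ∧ s = ∑' i : ℕ, T.indicator (fun i => γ ^ i) i}

namespace HFAux

open Filter

noncomputable def F : ℕ → ℝ := fun i => (2 : ℝ)⁻¹ ^ (i + 1)

noncomputable def G (γ : ℝ) : ℕ → ℝ := fun i => γ ^ i

lemma F_pos (i : ℕ) : 0 < F i := by unfold F; positivity

lemma summableF : Summable F := by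
  have h : Summable (fun i : ℕ => (2:ℝ)⁻¹ * (2:ℝ)⁻¹ ^ i) :=
    (summable_geometric_of_lt_one (by norm_num) (by norm_num)).mul_left _
  exact h.congr (fun i => (pow_succ' (2:ℝ)⁻¹ i).symm)

lemma tsumF : ∑' i, F i = 1 := by
  have : ∑' i : ℕ, (2:ℝ)⁻¹ * (2:ℝ)⁻¹ ^ i = (2:ℝ)⁻¹ * (1 - 2⁻¹)⁻¹ := by
    rw [tsum_mul_left, tsum_geometric_of_lt_one (by norm_num) (by norm_num)]
  have e : ∀ i : ℕ, F i = (2:ℝ)⁻¹ * (2:ℝ)⁻¹ ^ i := fun i => pow_succ' _ _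
  rw [tsum_congr e, this]; norm_num

lemma tsumF_tail (n : ℕ) : ∑' i : ℕ, F (i + n) = (2:ℝ)⁻¹ ^ n := by
  have e : ∀ i : ℕ, F (i + n) = F i * (2:ℝ)⁻¹ ^ n := by
    intro i; unfold F; rw [← pow_add]; ring_nf
  rw [tsum_congr e, tsum_mul_right, tsumF, one_mul]

variable {γ : ℝ}

lemma summableG (hγ0 : 0 < γ) (hγ1 : γ < 1) : Summable (G γ) :=
  summable_geometric_of_lt_one hγ0.le hγ1

lemma tsumG_tail (hγ0 : 0 < γ) (hγ1 : γ < 1) (n : ℕ) :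
    ∑' i : ℕ, G γ (i + n) = γ ^ n * (1 - γ)⁻¹ := by
  have e : ∀ i : ℕ, G γ (i + n) = γ ^ i * γ ^ n := by
    intro i; unfold G; rw [← pow_add]
  rw [tsum_congr e, tsum_mul_right, tsum_geometric_of_lt_one hγ0.le hγ1]; ring

-- indicator facts
lemma ind_nonneg {f : ℕ → ℝ} (hf : ∀ i, 0 ≤ f i) (T : Set ℕ) (i : ℕ) :
    0 ≤ T.indicator f i := Set.indicator_nonneg (fun j _ => hf j) i

lemma ind_le {f : ℕ → ℝ} (hf : ∀ i, 0 ≤ f i) (T : Set ℕ) (i : ℕ) :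
    T.indicator f i ≤ f i := Set.indicator_le_self' (fun j _ => hf j) i

lemma summable_indF (T : Set ℕ) : Summable (T.indicator F) := summableF.indicator T

lemma summable_indG (hγ0 : 0 < γ) (hγ1 : γ < 1) (T : Set ℕ) :
    Summable (T.indicator (G γ)) := (summableG hγ0 hγ1).indicator T

/-- the γ-value of an expansion -/
noncomputable def gs (γ : ℝ) (T : Set ℕ) : ℝ := ∑' i : ℕ, T.indicator (G γ) i

lemma lamOf_eq (T : Set ℕ) : lamOf T = ∑' i, T.indicator F i := rfl

lemma hFun_eq_def (γ x : ℝ) :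
    hFun γ x = sInf {s : ℝ | ∃ T : Set ℕ, lamOf T = x ∧ s = gs γ T} := rfl

lemma lamOf_nonneg (T : Set ℕ) : 0 ≤ lamOf T :=
  tsum_nonneg (ind_nonneg (fun i => (F_pos i).le) T)

lemma lamOf_le_one (T : Set ℕ) : lamOf T ≤ 1 := by
  calc lamOf T ≤ ∑' i, F i :=
        Summable.tsum_le_tsum (ind_le (fun i => (F_pos i).le) T) (summable_indF T) summableF
    _ = 1 := tsumF

/-- tsum over indicator of insert -/
lemma tsum_ind_insert {f : ℕ → ℝ} (hf : Summable f) {T : Set ℕ} {n : ℕ} (hn : n ∉ T) :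
    ∑' i, (insert n T).indicator f i = (∑' i, T.indicator f i) + f n := by
  have key : ∀ i, (insert n T).indicator f i
      = T.indicator f i + ({n} : Set ℕ).indicator f i := by
    classical
    intro i
    by_cases hi : i = n
    · subst hi
      simp [Set.indicator_apply, hn]
    · rw [Set.indicator_apply, Set.indicator_apply, Set.indicator_apply]
      rw [if_neg (by simpa using hi : ¬ i ∈ ({n} : Set ℕ))]
      have : (i ∈ insert n T) ↔ (i ∈ T) := by simp [Set.mem_insert_iff, hi]
      by_cases h : i ∈ T
      · rw [if_pos (this.2 h), if_pos h, add_zero]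
      · rw [if_neg (fun hh => h (this.1 hh)), if_neg h, add_zero]
  rw [tsum_congr key, Summable.tsum_add (hf.indicator T) (hf.indicator {n})]
  congr 1
  rw [tsum_eq_single n]
  · simp
  · intro j hj; simp [Set.indicator_apply, hj]

lemma lamOf_insert {T : Set ℕ} {n : ℕ} (hn : n ∉ T) :
    lamOf (insert n T) = lamOf T + (2:ℝ)⁻¹ ^ (n + 1) :=
  tsum_ind_insert summableF hn

lemma gs_insert (hγ0 : 0 < γ) (hγ1 : γ < 1) {T : Set ℕ} {n : ℕ} (hn : n ∉ T) :
    gs γ (insert n T) = gs γ T + γ ^ n :=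
  tsum_ind_insert (summableG hγ0 hγ1) hn

/-- `T` is tail-free if it contains no full tail `(m, ∞)`. -/
def tailFree (T : Set ℕ) : Prop := ∀ m : ℕ, ∃ i, m < i ∧ i ∉ T

lemma tailFree_mono {T S : Set ℕ} (h : S ⊆ T) (hT : tailFree T) : tailFree S := by
  intro m; obtain ⟨i, h1, h2⟩ := hT m; exact ⟨i, h1, fun hi => h2 (h hi)⟩

lemma tailFree_insert {T : Set ℕ} (hT : tailFree T) (n : ℕ) : tailFree (insert n T) := by
  intro m
  obtain ⟨i, h1, h2⟩ := hT (max m n)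
  refine ⟨i, lt_of_le_of_lt (le_max_left _ _) h1, ?_⟩
  intro hi
  rcases hi with hi | hi
  · exact absurd hi.symm (ne_of_gt (lt_of_le_of_lt (le_max_right _ _) h1)).symm
  · exact h2 hi

/-- Classification: if two distinct expansions give the same value, with least
difference at `m ∈ T \ S`, then `T` stops at `m` and `S` has a full tail after `m`. -/
lemma classify {T S : Set ℕ} {m : ℕ}
    (hls : lamOf T = lamOf S) (hmT : m ∈ T) (hmS : m ∉ S)
    (hlt : ∀ i, i < m → (i ∈ T ↔ i ∈ S)) :
    (∀ i, m < i → i ∉ T) ∧ (∀ i, m < i → i ∈ S) := by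
  classical
  set a := T.indicator F with ha_def
  set b := S.indicator F with hb_def
  have ha : Summable a := summable_indF T
  have hb : Summable b := summable_indF S
  have hanneg : ∀ i, 0 ≤ a i := ind_nonneg (fun i => (F_pos i).le) T
  have hbnneg : ∀ i, 0 ≤ b i := ind_nonneg (fun i => (F_pos i).le) S
  have hab : ∀ i, i < m → a i = b i := by
    intro i hi
    simp only [ha_def, hb_def, Set.indicator_apply]
    by_cases h : i ∈ T
    · rw [if_pos h, if_pos ((hlt i hi).1 h)]
    · rw [if_neg h, if_neg (fun hs => h ((hlt i hi).2 hs))]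
  have ham : a m = F m := by simp [ha_def, Set.indicator_apply, hmT]
  have hbm : b m = 0 := by simp [hb_def, Set.indicator_apply, hmS]
  -- partial sums up to m+1
  have hsum_ab : ∑ i ∈ Finset.range (m+1), b i + F m = ∑ i ∈ Finset.range (m+1), a i := by
    rw [Finset.sum_range_succ, Finset.sum_range_succ, ham, hbm,
      Finset.sum_congr rfl (fun i hi => (hab i (Finset.mem_range.1 hi)).symm)]
    ring
  have hb_split : ∑' i, b i = ∑ i ∈ Finset.range (m+1), b i + ∑' i, b (i + (m+1)) :=
    (Summable.sum_add_tsum_nat_add (m+1) hb).symm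
  have ha_split : ∑' i, a i = ∑ i ∈ Finset.range (m+1), a i + ∑' i, a (i + (m+1)) :=
    (Summable.sum_add_tsum_nat_add (m+1) ha).symm
  have hbt : Summable (fun i => b (i + (m+1))) := (summable_nat_add_iff (m+1)).2 hb
  have hat : Summable (fun i => a (i + (m+1))) := (summable_nat_add_iff (m+1)).2 ha
  have hFt : Summable (fun i => F (i + (m+1))) := (summable_nat_add_iff (m+1)).2 summableF
  have hb_tail_le : ∑' i, b (i + (m+1)) ≤ ∑' i, F (i + (m+1)) :=
    Summable.tsum_le_tsum (fun i => ind_le (fun j => (F_pos j).le) S _) hbt hFt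
  have hFtail : ∑' i, F (i + (m+1)) = (2:ℝ)⁻¹ ^ (m+1) := tsumF_tail (m+1)
  have hFmval : F m = (2:ℝ)⁻¹ ^ (m+1) := rfl
  have ha_tail_nonneg : 0 ≤ ∑' i, a (i + (m+1)) := tsum_nonneg (fun i => hanneg _)
  -- the equality chain
  have hchain : ∑' i, b i ≤ ∑ i ∈ Finset.range (m+1), a i := by
    rw [hb_split]
    calc ∑ i ∈ Finset.range (m+1), b i + ∑' i, b (i + (m+1))
        ≤ ∑ i ∈ Finset.range (m+1), b i + (2:ℝ)⁻¹ ^ (m+1) := by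
          linarith [hb_tail_le, hFtail.le, hFtail.ge]
      _ = ∑ i ∈ Finset.range (m+1), a i := by rw [← hFmval]; exact hsum_ab
  have hchain2 : ∑ i ∈ Finset.range (m+1), a i ≤ ∑' i, a i := by
    rw [ha_split]; linarith
  have heq : ∑' i, a i = ∑ i ∈ Finset.range (m+1), a i := by
    have := hls
    rw [lamOf_eq, lamOf_eq] at this
    have h1 : ∑' i, a i = ∑' i, b i := this
    linarith
  have ha_tail_zero : ∑' i, a (i + (m+1)) = 0 := by
    rw [ha_split] at heq; linarith
  have hb_tail_eq : ∑' i, b (i + (m+1)) = ∑' i, F (i + (m+1)) := by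
    have h1 : ∑' i, b i = ∑' i, a i := by
      rw [lamOf_eq, lamOf_eq] at hls; exact hls.symm
    rw [heq] at h1
    rw [hb_split] at h1
    rw [hFtail]
    rw [← hFmval]
    linarith [hsum_ab]
  constructor
  · intro i hi
    intro hiT
    -- a i > 0 for i > m contradicts tail sum zero
    have hterm : a (i - (m+1) + (m+1)) = F i := by
      have : i - (m+1) + (m+1) = i := Nat.sub_add_cancel hi
      rw [this]; simp [ha_def, Set.indicator_apply, hiT]
    have hle : a (i - (m+1) + (m+1)) ≤ ∑' j, a (j + (m+1)) :=
      Summable.le_tsum hat _ (fun j _ => hanneg _)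
    rw [hterm, ha_tail_zero] at hle
    exact absurd hle (not_le.2 (F_pos i))
  · intro i hi
    by_contra hiS
    have hterm : b (i - (m+1) + (m+1)) < F (i - (m+1) + (m+1)) := by
      have hii : i - (m+1) + (m+1) = i := Nat.sub_add_cancel hi
      rw [hii]
      simp only [hb_def, Set.indicator_apply, if_neg hiS]
      exact F_pos i
    have : ∑' i, b (i + (m+1)) < ∑' i, F (i + (m+1)) :=
      Summable.tsum_lt_tsum (fun j => ind_le (fun k => (F_pos k).le) S _) hterm hbt hFt
    rw [hb_tail_eq] at this
    exact lt_irrefl _ this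


lemma gs_min (hγ : 1/2 < γ) (hγ1 : γ < 1) {T S : Set ℕ} (hT : tailFree T)
    (hTS : lamOf T = lamOf S) : gs γ T ≤ gs γ S := by
  classical
  have hγ0 : 0 < γ := by linarith
  by_cases hE : T = S
  · rw [hE]
  · have hex : ∃ i, ¬ (i ∈ T ↔ i ∈ S) := by
      by_contra h
      push_neg at h
      exact hE (Set.ext fun i => h i)
    set m := Nat.find hex with hm_def
    have hm : ¬ (m ∈ T ↔ m ∈ S) := Nat.find_spec hex
    have hlt : ∀ i, i < m → (i ∈ T ↔ i ∈ S) := fun i hi => not_not.1 (Nat.find_min hex hi)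
    by_cases hmT : m ∈ T
    · have hmS : m ∉ S := fun h => hm ⟨fun _ => h, fun _ => hmT⟩
      obtain ⟨hTa, hSa⟩ := classify hTS hmT hmS hlt
      have hgsT : gs γ T = ∑ i ∈ Finset.range (m+1), T.indicator (G γ) i := by
        apply tsum_eq_sum
        intro i hi
        have : m < i := by
          rcases Nat.lt_or_ge i (m+1) with h | h
          · exact absurd (Finset.mem_range.2 h) hi
          · omega
        rw [Set.indicator_apply, if_neg (hTa i this)]
      have hgsS : gs γ S = ∑ i ∈ Finset.range (m+1), S.indicator (G γ) i
          + γ ^ (m+1) * (1 - γ)⁻¹ := by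
        rw [show gs γ S = ∑' i, S.indicator (G γ) i from rfl,
          ← Summable.sum_add_tsum_nat_add (m+1) (summable_indG hγ0 hγ1 S)]
        congr 1
        have : ∀ i : ℕ, S.indicator (G γ) (i + (m+1)) = G γ (i + (m+1)) := by
          intro i
          rw [Set.indicator_apply, if_pos (hSa _ (by omega))]
        rw [tsum_congr this, tsumG_tail hγ0 hγ1]
      have hsums : ∑ i ∈ Finset.range (m+1), T.indicator (G γ) i
          = ∑ i ∈ Finset.range (m+1), S.indicator (G γ) i + γ ^ m := by
        rw [Finset.sum_range_succ, Finset.sum_range_succ]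
        have h1 : T.indicator (G γ) m = γ ^ m := by
          rw [Set.indicator_apply, if_pos hmT]; rfl
        have h2 : S.indicator (G γ) m = 0 := by
          rw [Set.indicator_apply, if_neg hmS]
        have h3 : ∑ i ∈ Finset.range m, T.indicator (G γ) i
            = ∑ i ∈ Finset.range m, S.indicator (G γ) i := by
          apply Finset.sum_congr rfl
          intro i hi
          have hi' := Finset.mem_range.1 hi
          rw [Set.indicator_apply, Set.indicator_apply]
          by_cases h : i ∈ T
          · rw [if_pos h, if_pos ((hlt i hi').1 h)]
          · rw [if_neg h, if_neg (fun hs => h ((hlt i hi').2 hs))]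
        rw [h1, h2, h3]; ring
      rw [hgsT, hgsS, hsums]
      have hpow : (0:ℝ) < γ ^ m := pow_pos hγ0 m
      have h1γ : (0:ℝ) < 1 - γ := by linarith
      have key : γ ^ m ≤ γ ^ (m+1) * (1 - γ)⁻¹ := by
        have hq : (1:ℝ) ≤ γ * (1-γ)⁻¹ := by
          rw [← div_eq_mul_inv, le_div_iff₀ h1γ]; linarith
        calc γ ^ m = γ ^ m * 1 := (mul_one _).symm
          _ ≤ γ ^ m * (γ * (1-γ)⁻¹) := mul_le_mul_of_nonneg_left hq hpow.le
          _ = γ ^ (m+1) * (1-γ)⁻¹ := by ring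
      linarith
    · have hmS : m ∈ S := by
        by_contra hmS
        exact hm ⟨fun h => absurd h hmT, fun h => absurd h hmS⟩
      obtain ⟨_, hTa⟩ := classify hTS.symm hmS hmT (fun i hi => (hlt i hi).symm)
      obtain ⟨i, hi1, hi2⟩ := hT m
      exact absurd (hTa i hi1) hi2

lemma hFun_eq (hγ : 1/2 < γ) (hγ1 : γ < 1) {T : Set ℕ} {x : ℝ} (hT : tailFree T)
    (hx : lamOf T = x) : hFun γ x = gs γ T := by
  rw [hFun_eq_def]
  apply IsLeast.csInf_eq
  constructor
  · exact ⟨T, hx, rfl⟩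
  · rintro s ⟨S, hS, rfl⟩
    exact gs_min hγ hγ1 hT (hx.trans hS.symm)

lemma lamOf_univ : lamOf (Set.univ : Set ℕ) = 1 := by
  rw [lamOf_eq]
  have : ∀ i : ℕ, (Set.univ : Set ℕ).indicator F i = F i := by
    intro i; rw [Set.indicator_univ]
  rw [tsum_congr this, tsumF]

lemma expansion_one {S : Set ℕ} (h : lamOf S = 1) : S = Set.univ := by
  classical
  by_contra hne
  have : ∃ j, j ∉ S := by
    by_contra hh
    push_neg at hh
    exact hne (Set.eq_univ_of_forall hh)
  obtain ⟨j, hj⟩ := this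
  have hlt : lamOf S < lamOf Set.univ := by
    rw [lamOf_eq, lamOf_eq]
    apply Summable.tsum_lt_tsum (i := j)
    · intro i
      rw [Set.indicator_univ]
      exact ind_le (fun k => (F_pos k).le) S i
    · rw [Set.indicator_univ, Set.indicator_apply, if_neg hj]
      exact F_pos j
    · exact summable_indF S
    · exact summable_indF Set.univ
  rw [h, lamOf_univ] at hlt
  exact lt_irrefl _ hlt

lemma gs_univ (hγ0 : 0 < γ) (hγ1 : γ < 1) : gs γ (Set.univ : Set ℕ) = (1 - γ)⁻¹ := by
  show ∑' i, (Set.univ : Set ℕ).indicator (G γ) i = _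
  have : ∀ i : ℕ, (Set.univ : Set ℕ).indicator (G γ) i = G γ i := by
    intro i; rw [Set.indicator_univ]
  rw [tsum_congr this]
  exact tsum_geometric_of_lt_one hγ0.le hγ1

lemma hFun_one (hγ0 : 0 < γ) (hγ1 : γ < 1) : hFun γ 1 = (1 - γ)⁻¹ := by
  rw [hFun_eq_def]
  have : {s : ℝ | ∃ T : Set ℕ, lamOf T = 1 ∧ s = gs γ T} = {(1 - γ)⁻¹} := by
    ext s
    simp only [Set.mem_setOf_eq, Set.mem_singleton_iff]
    constructor
    · rintro ⟨T, hT, rfl⟩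
      rw [expansion_one hT, gs_univ hγ0 hγ1]
    · rintro rfl
      exact ⟨Set.univ, lamOf_univ, (gs_univ hγ0 hγ1).symm⟩
  rw [this, csInf_singleton]

-- greedy binary expansion
def D (x : ℝ) : Set ℕ := {i | ⌊x * 2 ^ (i+1)⌋ % 2 = 1}

lemma floor_step (x : ℝ) (n : ℕ) :
    ⌊x * 2 ^ (n+1)⌋ = 2 * ⌊x * 2 ^ n⌋ ∨ ⌊x * 2 ^ (n+1)⌋ = 2 * ⌊x * 2 ^ n⌋ + 1 := by
  set k := ⌊x * 2 ^ n⌋ with hk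
  have h1 : (k:ℝ) ≤ x * 2^n := Int.floor_le _
  have h2 : x * 2^n < k + 1 := Int.lt_floor_add_one _
  have h3 : (2*k : ℤ) ≤ ⌊x * 2^(n+1)⌋ := by
    apply Int.le_floor.2
    push_cast
    have : x * 2^(n+1) = (x * 2^n) * 2 := by ring
    rw [this]; nlinarith
  have h4 : ⌊x * 2^(n+1)⌋ < 2*k + 2 := by
    apply Int.floor_lt.2
    push_cast
    have : x * 2^(n+1) = (x * 2^n) * 2 := by ring
    rw [this]; nlinarith
  omega

lemma greedy_sum {x : ℝ} (hx0 : 0 ≤ x) (hx1 : x < 1) (n : ℕ) :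
    ∑ i ∈ Finset.range n, (D x).indicator F i = (⌊x * 2 ^ n⌋ : ℝ) / 2 ^ n := by
  classical
  induction n with
  | zero =>
    simp only [Finset.range_zero, Finset.sum_empty, pow_zero, mul_one]
    rw [Int.floor_eq_zero_iff.2 (Set.mem_Ico.2 ⟨hx0, hx1⟩)]
    norm_num
  | succ n ih =>
    rw [Finset.sum_range_succ, ih]
    have hp : (0:ℝ) < 2 ^ (n+1) := by positivity
    rcases floor_step x n with h | h
    · have hmem : n ∉ D x := by
        intro hm
        have h2 : ⌊x*2^(n+1)⌋ % 2 = 1 := hm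
        omega
      rw [Set.indicator_apply, if_neg hmem, h]
      push_cast
      field_simp
      ring
    · have hmem : n ∈ D x := by
        show ⌊x*2^(n+1)⌋ % 2 = 1
        omega
      rw [Set.indicator_apply, if_pos hmem, h]
      have hF : F n = ((2:ℝ)^(n+1))⁻¹ := inv_pow 2 (n+1)
      rw [hF]
      push_cast
      field_simp
      ring


lemma greedy_lamOf {x : ℝ} (hx0 : 0 ≤ x) (hx1 : x < 1) : lamOf (D x) = x := by
  have hs : Tendsto (fun n => ∑ i ∈ Finset.range n, (D x).indicator F i) atTop
      (nhds (lamOf (D x))) := (summable_indF (D x)).hasSum.tendsto_sum_nat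
  have hb : ∀ n : ℕ, ‖∑ i ∈ Finset.range n, (D x).indicator F i - x‖ ≤ (2:ℝ)⁻¹ ^ n := by
    intro n
    rw [Real.norm_eq_abs, greedy_sum hx0 hx1 n]
    have hp : (0:ℝ) < 2 ^ n := by positivity
    have h1 : (⌊x*2^n⌋:ℝ) ≤ x*2^n := Int.floor_le _
    have h2 : x*2^n < ⌊x*2^n⌋ + 1 := Int.lt_floor_add_one _
    have e : (⌊x*2^n⌋:ℝ)/2^n - x = ((⌊x*2^n⌋:ℝ) - x*2^n)/2^n := by field_simp
    rw [e, abs_le, inv_pow]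
    have hnum1 : (-1:ℝ) ≤ (⌊x*2^n⌋:ℝ) - x*2^n := by linarith
    have hnum2 : (⌊x*2^n⌋:ℝ) - x*2^n ≤ 0 := by linarith
    constructor
    · have h3 : (-1:ℝ)/2^n ≤ ((⌊x*2^n⌋:ℝ) - x*2^n)/2^n := by gcongr
      calc -((2:ℝ)^n)⁻¹ = (-1:ℝ)/2^n := by rw [neg_div, one_div]
        _ ≤ _ := h3
    · have h4 : ((⌊x*2^n⌋:ℝ) - x*2^n)/2^n ≤ 0 := by
        rw [div_nonpos_iff]
        exact Or.inr ⟨hnum2, hp.le⟩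
      exact h4.trans (inv_nonneg.2 (by positivity))
  have h0 : Tendsto (fun n : ℕ => (2:ℝ)⁻¹ ^ n) atTop (nhds 0) :=
    tendsto_pow_atTop_nhds_zero_of_lt_one (by norm_num) (by norm_num)
  have ht0 : Tendsto (fun n => ∑ i ∈ Finset.range n, (D x).indicator F i - x) atTop
      (nhds 0) := squeeze_zero_norm hb h0
  have ht : Tendsto (fun n => ∑ i ∈ Finset.range n, (D x).indicator F i) atTop (nhds x) := by
    have := ht0.add_const x
    simpa using this
  exact tendsto_nhds_unique hs ht

lemma greedy_tailFree {x : ℝ} (hx0 : 0 ≤ x) (hx1 : x < 1) : tailFree (D x) := by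
  classical
  intro m
  by_contra h
  push_neg at h
  have hsplit : lamOf (D x) = ∑ i ∈ Finset.range (m+1), (D x).indicator F i
      + ∑' i, (D x).indicator F (i + (m+1)) :=
    (Summable.sum_add_tsum_nat_add (m+1) (summable_indF _)).symm
  have htail : ∀ i : ℕ, (D x).indicator F (i + (m+1)) = F (i + (m+1)) := by
    intro i
    rw [Set.indicator_apply, if_pos (h _ (by omega))]
  have hval : lamOf (D x) = (⌊x*2^(m+1)⌋:ℝ)/2^(m+1) + (2:ℝ)⁻¹ ^ (m+1) := by
    rw [hsplit, greedy_sum hx0 hx1, tsum_congr htail, tsumF_tail]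
  rw [greedy_lamOf hx0 hx1] at hval
  have hp : (0:ℝ) < 2^(m+1) := by positivity
  have hxe : x * 2^(m+1) = (⌊x*2^(m+1)⌋:ℝ) + 1 := by
    rw [inv_pow] at hval
    field_simp at hval
    linarith
  have := Int.lt_floor_add_one (x * 2^(m+1))
  linarith

lemma sumF_range (n : ℕ) : ∑ i ∈ Finset.range n, F i = 1 - (2:ℝ)⁻¹ ^ n := by
  induction n with
  | zero => simp
  | succ n ih =>
    rw [Finset.sum_range_succ, ih]
    have : F n = (2:ℝ)⁻¹ ^ (n+1) := rfl
    rw [this]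
    ring

lemma lamOf_Iic (n : ℕ) : lamOf {i : ℕ | i ≤ n} = 1 - (2:ℝ)⁻¹ ^ (n+1) := by
  classical
  rw [lamOf_eq]
  have : ∑' i, ({i : ℕ | i ≤ n}).indicator F i = ∑ i ∈ Finset.range (n+1), ({i : ℕ | i ≤ n}).indicator F i := by
    apply tsum_eq_sum
    intro i hi
    have : ¬ i ≤ n := by
      intro hle
      exact hi (Finset.mem_range.2 (by omega))
    rw [Set.indicator_apply]
    simp only [Set.mem_setOf_eq]
    rw [if_neg this]
  rw [this, ← sumF_range (n+1)]
  apply Finset.sum_congr rfl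
  intro i hi
  rw [Set.indicator_apply]
  simp only [Set.mem_setOf_eq]
  rw [if_pos (Nat.lt_succ_iff.1 (Finset.mem_range.1 hi))]

lemma tailFree_Iic (n : ℕ) : tailFree {i : ℕ | i ≤ n} := by
  intro m
  exact ⟨max m n + 1, by omega, by simp only [Set.mem_setOf_eq]; omega⟩

lemma gs_Iic (hγ0 : 0 < γ) (hγ1 : γ < 1) (n : ℕ) :
    gs γ {i : ℕ | i ≤ n} = (1 - γ^(n+1)) / (1 - γ) := by
  classical
  show ∑' i, ({i : ℕ | i ≤ n}).indicator (G γ) i = _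
  have h1 : ∑' i, ({i : ℕ | i ≤ n}).indicator (G γ) i
      = ∑ i ∈ Finset.range (n+1), ({i : ℕ | i ≤ n}).indicator (G γ) i := by
    apply tsum_eq_sum
    intro i hi
    have : ¬ i ≤ n := fun hle => hi (Finset.mem_range.2 (by omega))
    rw [Set.indicator_apply]
    simp only [Set.mem_setOf_eq]
    rw [if_neg this]
  have h2 : ∑ i ∈ Finset.range (n+1), ({i : ℕ | i ≤ n}).indicator (G γ) i
      = ∑ i ∈ Finset.range (n+1), γ ^ i := by
    apply Finset.sum_congr rfl
    intro i hi
    rw [Set.indicator_apply]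
    simp only [Set.mem_setOf_eq]
    rw [if_pos (Nat.lt_succ_iff.1 (Finset.mem_range.1 hi))]
    rfl
  rw [h1, h2, geom_sum_eq (ne_of_lt hγ1) (n+1)]
  rw [div_eq_div_iff (by linarith) (by linarith)]
  ring

lemma key_step (hγ : 1/2 < γ) (hγ1 : γ < 1) {x : ℝ} (hx : x ∈ Set.Icc (0:ℝ) 1) (n : ℕ) :
    ∃ δ : ℝ, |δ| = (2:ℝ)⁻¹ ^ (n+1) ∧ x + δ ∈ Set.Icc (0:ℝ) 1 ∧
      γ ^ n ≤ |hFun γ (x + δ) - hFun γ x| := by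
  classical
  have hγ0 : 0 < γ := by linarith
  have hγpow : (0:ℝ) < γ ^ n := pow_pos hγ0 n
  have hFpos : (0:ℝ) < (2:ℝ)⁻¹ ^ (n+1) := by positivity
  have hFle : (2:ℝ)⁻¹ ^ (n+1) ≤ 1 := by
    apply pow_le_one₀ <;> norm_num
  have h1γ : (0:ℝ) < 1 - γ := by linarith
  rcases eq_or_lt_of_le hx.2 with h1 | h1
  · -- x = 1
    subst h1
    refine ⟨-((2:ℝ)⁻¹ ^ (n+1)), by rw [abs_neg, abs_of_pos hFpos], ⟨by linarith, by linarith⟩, ?_⟩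
    · have e1 : (1:ℝ) + -((2:ℝ)⁻¹ ^ (n+1)) = 1 - (2:ℝ)⁻¹ ^ (n+1) := by ring
      rw [e1, hFun_eq hγ hγ1 (tailFree_Iic n) (lamOf_Iic n), hFun_one hγ0 hγ1,
        gs_Iic hγ0 hγ1]
      have e2 : (1 - γ^(n+1)) / (1 - γ) - (1 - γ)⁻¹ = -(γ^(n+1) * (1-γ)⁻¹) := by
        field_simp
        ring
      rw [e2, abs_neg, abs_of_pos (by positivity)]
      -- γ^n ≤ γ^(n+1)/(1-γ)
      have hq : (1:ℝ) ≤ γ * (1-γ)⁻¹ := by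
        rw [← div_eq_mul_inv, le_div_iff₀ h1γ]; linarith
      calc γ ^ n = γ ^ n * 1 := (mul_one _).symm
        _ ≤ γ ^ n * (γ * (1-γ)⁻¹) := mul_le_mul_of_nonneg_left hq hγpow.le
        _ = γ ^ (n+1) * (1-γ)⁻¹ := by ring
  · -- x < 1
    have hx0 := hx.1
    have hT : lamOf (D x) = x := greedy_lamOf hx0 h1
    have hTF : tailFree (D x) := greedy_tailFree hx0 h1
    have hhx : hFun γ x = gs γ (D x) := hFun_eq hγ hγ1 hTF hT
    by_cases hn : n ∈ D x
    · -- remove the digit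
      set T' : Set ℕ := D x \ {n} with hT'def
      have hn' : n ∉ T' := by simp [hT'def]
      have hins : insert n T' = D x := by
        rw [hT'def, Set.insert_diff_singleton, Set.insert_eq_self.2 hn]
      have hlam : lamOf (D x) = lamOf T' + (2:ℝ)⁻¹ ^ (n+1) := by
        rw [← hins]; exact lamOf_insert hn'
      have hgs : gs γ (D x) = gs γ T' + γ ^ n := by
        rw [← hins]; exact gs_insert hγ0 hγ1 hn'
      refine ⟨-((2:ℝ)⁻¹ ^ (n+1)), by rw [abs_neg, abs_of_pos hFpos], ?_, ?_⟩
      · have hx' : x + -((2:ℝ)⁻¹ ^ (n+1)) = lamOf T' := by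
          rw [← hT, hlam]; ring
        rw [hx']
        exact ⟨lamOf_nonneg T', lamOf_le_one T'⟩
      · have hx' : x + -((2:ℝ)⁻¹ ^ (n+1)) = lamOf T' := by
          rw [← hT, hlam]; ring
        rw [hx', hFun_eq hγ hγ1 (tailFree_mono Set.diff_subset hTF) rfl, hhx, hgs]
        rw [show gs γ T' - (gs γ T' + γ ^ n) = -(γ^n) by ring, abs_neg,
          abs_of_pos hγpow]
    · -- add the digit
      set T' : Set ℕ := insert n (D x) with hT'def
      have hlam : lamOf T' = x + (2:ℝ)⁻¹ ^ (n+1) := by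
        rw [hT'def, lamOf_insert hn, hT]
      have hgs : gs γ T' = gs γ (D x) + γ ^ n := gs_insert hγ0 hγ1 hn
      refine ⟨(2:ℝ)⁻¹ ^ (n+1), abs_of_pos hFpos, ?_, ?_⟩
      · rw [← hlam]
        exact ⟨lamOf_nonneg T', lamOf_le_one T'⟩
      · rw [← hlam, hFun_eq hγ hγ1 (tailFree_insert hTF n) rfl, hhx, hgs]
        rw [show gs γ (D x) + γ ^ n - gs γ (D x) = γ^n by ring, abs_of_pos hγpow]

end HFAux

theorem hFun_nowhere_differentiable (γ : ℝ) (hγ : 1 / 2 < γ) (hγ1 : γ < 1) :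
    ∀ x ∈ Icc (0 : ℝ) 1,
      (∀ C : ℝ, 0 < C → ∀ ε : ℝ, 0 < ε → ∃ δ : ℝ, δ ≠ 0 ∧ |δ| < ε ∧
          x + δ ∈ Icc (0 : ℝ) 1 ∧ C * |δ| < |hFun γ (x + δ) - hFun γ x|) ∧
      ¬ DifferentiableWithinAt ℝ (hFun γ) (Icc (0 : ℝ) 1) x := by
  intro x hx
  have hγ0 : 0 < γ := by linarith
  have h2γ : (1:ℝ) < 2 * γ := by linarith
  have part1 : ∀ C : ℝ, 0 < C → ∀ ε : ℝ, 0 < ε → ∃ δ : ℝ, δ ≠ 0 ∧ |δ| < ε ∧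
      x + δ ∈ Icc (0:ℝ) 1 ∧ C * |δ| < |hFun γ (x + δ) - hFun γ x| := by
    intro C hC ε hε
    have hev1 : ∀ᶠ n : ℕ in Filter.atTop, C / 2 < (2*γ) ^ n :=
      (tendsto_pow_atTop_atTop_of_one_lt h2γ).eventually_gt_atTop (C/2)
    have hev2 : ∀ᶠ n : ℕ in Filter.atTop, (2:ℝ)⁻¹ ^ n < ε := by
      have h := tendsto_pow_atTop_nhds_zero_of_lt_one
        (by norm_num : (0:ℝ) ≤ 2⁻¹) (by norm_num : (2:ℝ)⁻¹ < 1)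
      exact h.eventually (gt_mem_nhds hε)
    obtain ⟨n, hn1, hn2⟩ := (hev1.and hev2).exists
    obtain ⟨δ, hδabs, hδmem, hδdiff⟩ := HFAux.key_step hγ hγ1 hx n
    have hFpos : (0:ℝ) < (2:ℝ)⁻¹ ^ (n+1) := by positivity
    have hhalfpow : (0:ℝ) < (2:ℝ)⁻¹ ^ n := by positivity
    refine ⟨δ, ?_, ?_, hδmem, ?_⟩
    · intro h0
      rw [h0, abs_zero] at hδabs
      exact absurd hδabs.symm (ne_of_gt hFpos)
    · rw [hδabs]
      have hle : (2:ℝ)⁻¹ ^ (n+1) ≤ (2:ℝ)⁻¹ ^ n := by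
        rw [pow_succ]; nlinarith
      linarith
    · rw [hδabs]
      have h2n : (0:ℝ) < 2 ^ (n+1) := by positivity
      have hC2 : C < 2 * (2 ^ n * γ ^ n) := by
        have := mul_pow 2 γ n
        nlinarith
      have hlt : C * (2:ℝ)⁻¹ ^ (n+1) < γ ^ n := by
        rw [inv_pow, mul_comm, inv_mul_eq_div, div_lt_iff₀ h2n]
        have : γ ^ n * 2 ^ (n+1) = 2 * (2 ^ n * γ ^ n) := by ring
        rw [this]
        exact hC2
      exact lt_of_lt_of_le hlt hδdiff
  refine ⟨part1, ?_⟩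
  intro hdiff
  have hd := hdiff.hasDerivWithinAt
  rw [hasDerivWithinAt_iff_isLittleO] at hd
  set d := derivWithin (hFun γ) (Icc (0:ℝ) 1) x with hd_def
  have hev : ∀ᶠ y in nhdsWithin x (Icc (0:ℝ) 1),
      ‖hFun γ y - hFun γ x - (y - x) • d‖ ≤ 1 * ‖y - x‖ := hd.def one_pos
  have hmem : {y : ℝ | ‖hFun γ y - hFun γ x - (y - x) • d‖ ≤ 1 * ‖y - x‖}
      ∈ nhdsWithin x (Icc (0:ℝ) 1) := hev
  rw [Metric.mem_nhdsWithin_iff] at hmem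
  obtain ⟨ε, hε, hball⟩ := hmem
  obtain ⟨δ, hδ0, hδε, hδmem, hδbig⟩ := part1 (|d| + 2) (by positivity) ε hε
  have hb1 : x + δ ∈ Metric.ball x ε := by
    rw [Metric.mem_ball, Real.dist_eq]
    simpa using hδε
  have h2 : ‖hFun γ (x + δ) - hFun γ x - (x + δ - x) • d‖ ≤ 1 * ‖x + δ - x‖ :=
    hball ⟨hb1, hδmem⟩
  simp only [Real.norm_eq_abs, smul_eq_mul, add_sub_cancel_left, one_mul] at h2
  have habs : |hFun γ (x + δ) - hFun γ x| ≤ |δ| + |d| * |δ| := by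
    have h3 : |hFun γ (x + δ) - hFun γ x|
        ≤ |hFun γ (x + δ) - hFun γ x - δ * d| + |δ * d| := by
      have := abs_add_le (hFun γ (x + δ) - hFun γ x - δ * d) (δ * d)
      simpa using this
    have h4 : |δ * d| = |δ| * |d| := abs_mul δ d
    nlinarith [abs_nonneg δ, abs_nonneg d]
  have hpos : 0 < |δ| := abs_pos.2 hδ0
  nlinarith [abs_nonneg d]
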